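/- Let F be a field, H ∈ F^{p×p} with all eigenvalues in an extension field E of F, K ∈ F^{p×q}, and d ≥ deg μ_H. If there is a nonzero row vector u ∈ E^{1×p} with u[K, HK, …, H^{d−1}K] = 0, then there exist an eigenvalue λ of H and a nonzero row vector v ∈ E^{1×p} such that v(λI − H) = 0 and vK = 0. -/

import Mathlib

open Matrix Polynomial

private lemma my_charpoly_transpose {R : Type*} [CommRing R] {n : ℕ}
    (A : Matrix (Fin n) (Fin n) R) : Aᵀ.charpoly = A.charpoly := by
  rw [Matrix.charpoly, Matrix.charpoly, ← Matrix.det_transpose (charmatrix A)]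
  congr 1
  ext i j
  by_cases h : i = j
  · subst h; simp
  · simp [Matrix.charmatrix_apply_ne _ _ _ h,
      Matrix.charmatrix_apply_ne _ _ _ (Ne.symm h)]

private lemma my_vecMul_smul {R : Type*} [CommRing R] {m n : ℕ}
    (v : Fin m → R) (c : R) (M : Matrix (Fin m) (Fin n) R) :
    v ᵥ* (c • M) = c • (v ᵥ* M) := by
  funext j
  simp [Matrix.vecMul, dotProduct, Finset.mul_sum, mul_left_comm]

private lemma my_vecMul_sum {R : Type*} [CommRing R] {m n : ℕ} {ι : Type*}
    (v : Fin m → R) (s : Finset ι) (f : ι → Matrix (Fin m) (Fin n) R) :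
    v ᵥ* (∑ i ∈ s, f i) = ∑ i ∈ s, v ᵥ* f i := by
  funext j
  simp only [Matrix.vecMul, dotProduct, Finset.sum_apply, Matrix.sum_apply,
    Finset.mul_sum]
  rw [Finset.sum_comm]

/-- If a nonzero row vector u over E annihilates [K, HK, …, H^{d-1}K]
(d ≥ deg μ_H), then some eigenvalue λ of H admits a nonzero row vector v
with v(λI − H) = 0 and vK = 0. -/
theorem exists_eigen_row_of_vecMul_ctrb_eq_zero
    {F E : Type*} [Field F] [Field E] [Algebra F E] {p q : ℕ}
    (H : Matrix (Fin p) (Fin p) F) (K : Matrix (Fin p) (Fin q) F)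
    (hsplit : Polynomial.Splits (H.charpoly.map (algebraMap F E)))
    (d : ℕ) (hd : (minpoly F H).natDegree ≤ d)
    (u : Fin p → E) (hu : u ≠ 0)
    (huC : Matrix.vecMul u ((Matrix.of fun (i : Fin p) (dq : Fin d × Fin q) =>
      (H ^ (dq.1 : ℕ) * K) i dq.2).map (algebraMap F E)) = 0) :
    ∃ lam : E, (Polynomial.aeval lam) H.charpoly = 0 ∧
      ∃ v : Fin p → E, v ≠ 0 ∧
        Matrix.vecMul v (lam • (1 : Matrix (Fin p) (Fin p) E) - H.map (algebraMap F E)) = 0 ∧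
        Matrix.vecMul v (K.map (algebraMap F E)) = 0 := by
  have hp : p ≠ 0 := by rintro rfl; exact hu (funext fun i => i.elim0)
  haveI : Nonempty (Fin p) := Fin.pos_iff_nonempty.mp (Nat.pos_of_ne_zero hp)
  set A : Matrix (Fin p) (Fin p) E := H.map (algebraMap F E) with hA
  set B : Matrix (Fin p) (Fin q) E := K.map (algebraMap F E) with hB
  have hintH : IsIntegral F H := IsIntegral.of_finite F H
  have hm1 : 0 < (minpoly F H).natDegree := minpoly.natDegree_pos hintH
  set P' : E[X] := (minpoly F H).map (algebraMap F E) with hP'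
  have hP'monic : P'.Monic := (minpoly.monic hintH).map (algebraMap F E)
  have hP'deg : P'.natDegree = (minpoly F H).natDegree :=
    (minpoly.monic hintH).natDegree_map (algebraMap F E)
  -- A is a root of P'
  have hrootA : aeval A P' = 0 := by
    have h2 : ((Algebra.ofId F E).mapMatrix : Matrix (Fin p) (Fin p) F →ₐ[F] Matrix (Fin p) (Fin p) E) H = A := by
      ext i j; simp [hA, Algebra.ofId_apply]
    have h1 : aeval A (minpoly F H) = 0 := by
      rw [← h2, Polynomial.aeval_algHom_apply, minpoly.aeval, map_zero]
    rwa [hP', Polynomial.aeval_map_algebraMap]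
  -- map of the mixed products
  have hmap : ∀ j : ℕ, (H ^ j * K).map (algebraMap F E) = A ^ j * B := by
    intro j
    rw [Matrix.map_mul]
    congr 1
    rw [hA]
    induction j with
    | zero => simp [Matrix.map_one]
    | succ k ih => rw [pow_succ, pow_succ, Matrix.map_mul, ih]
  -- u annihilates A^j * B for j < d
  have hlt : ∀ j : Fin d, u ᵥ* (A ^ (j : ℕ) * B) = 0 := by
    intro j
    funext c
    have h := congr_fun huC (j, c)
    rw [← hmap]
    simpa [Matrix.vecMul, dotProduct, Matrix.map_apply] using h
  -- u annihilates A^n * B for all n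
  have hall : ∀ n : ℕ, u ᵥ* (A ^ n * B) = 0 := by
    intro n
    have hdeg : (X ^ n %ₘ P').natDegree < d := by
      rcases eq_or_ne (X ^ n %ₘ P') 0 with h | h
      · rw [h]; simpa using lt_of_lt_of_le hm1 hd
      · have h3 := Polynomial.degree_modByMonic_lt (X ^ n) hP'monic
        have h4 : (X ^ n %ₘ P').natDegree < P'.natDegree :=
          Polynomial.natDegree_lt_natDegree h h3
        omega
    have hAn : A ^ n = ∑ i ∈ Finset.range d, (X ^ n %ₘ P').coeff i • A ^ i := by
      have h1 : A ^ n = aeval A (X ^ n %ₘ P') := by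
        rw [Polynomial.aeval_modByMonic_eq_self_of_root hrootA, map_pow, aeval_X]
      rw [h1, Polynomial.aeval_eq_sum_range' hdeg]
    calc u ᵥ* (A ^ n * B)
        = ∑ i ∈ Finset.range d, (X ^ n %ₘ P').coeff i • (u ᵥ* (A ^ i * B)) := by
          rw [hAn, Matrix.sum_mul, my_vecMul_sum]
          refine Finset.sum_congr rfl fun i _ => ?_
          rw [Matrix.smul_mul, my_vecMul_smul]
      _ = 0 := by
          refine Finset.sum_eq_zero fun i hi => ?_
          rw [hlt ⟨i, Finset.mem_range.mp hi⟩, smul_zero]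
  -- the invariant subspace
  set W : Submodule E (Fin p → E) :=
    ⨅ n : ℕ, LinearMap.ker (Matrix.vecMulLinear (A ^ n * B)) with hW
  have hmemW : ∀ w, w ∈ W ↔ ∀ n, w ᵥ* (A ^ n * B) = 0 := by
    intro w
    simp [hW, Submodule.mem_iInf, LinearMap.mem_ker]
  have huW : u ∈ W := (hmemW u).2 hall
  set f : Module.End E (Fin p → E) := Matrix.toLinAlgEquiv' Aᵀ with hf
  have hf_apply : ∀ w, f w = w ᵥ* A := by
    intro w
    rw [hf, Matrix.toLinAlgEquiv'_apply, Matrix.mulVec_transpose]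
  have hinv : ∀ w ∈ W, f w ∈ W := by
    intro w hw
    rw [hmemW] at hw ⊢
    intro n
    rw [hf_apply, Matrix.vecMul_vecMul, ← Matrix.mul_assoc, ← pow_succ']
    exact hw (n + 1)
  set g : Module.End E W := f.restrict hinv with hg
  have hgpow : ∀ (k : ℕ) (x : W), ((g ^ k) x : Fin p → E) = (f ^ k) (x : Fin p → E) := by
    intro k x
    rw [hg, Module.End.pow_restrict]
    rfl
  have hkey : ∀ (P : E[X]) (x : W),
      ((aeval g P) x : Fin p → E) = (aeval f P) (x : Fin p → E) := by
    intro P x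
    induction P using Polynomial.induction_on' with
    | add pp qq hpp hqq =>
      rw [Polynomial.aeval_add, Polynomial.aeval_add, LinearMap.add_apply, LinearMap.add_apply, Submodule.coe_add,
        hpp, hqq]
    | monomial k a =>
      rw [aeval_monomial, aeval_monomial, Module.End.mul_apply, Module.End.mul_apply,
        Module.algebraMap_end_apply, Module.algebraMap_end_apply, Submodule.coe_smul, hgpow]
  have hfc : aeval f A.charpoly = 0 := by
    rw [hf]
    have h5 : aeval ((Matrix.toLinAlgEquiv' (R := E) (n := Fin p)).toAlgHom Aᵀ) A.charpoly
        = Matrix.toLinAlgEquiv'.toAlgHom (aeval Aᵀ A.charpoly) :=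
      Polynomial.aeval_algHom_apply _ _ _
    rw [← my_charpoly_transpose A] at h5
    rw [Matrix.aeval_self_charpoly, map_zero] at h5
    rw [my_charpoly_transpose A] at h5
    exact h5
  have hgcharpoly : aeval g A.charpoly = 0 := by
    apply LinearMap.ext
    intro x
    apply Subtype.ext
    rw [hkey]
    simp [hfc]
  haveI : Nontrivial W := nontrivial_of_ne ⟨u, huW⟩ 0 (by
    intro h
    exact hu (congrArg Subtype.val h))
  haveI : Nontrivial (Module.End E W) := by
    refine nontrivial_of_ne 1 0 fun h => ?_
    obtain ⟨x, y, hxy⟩ := exists_pair_ne W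
    have := LinearMap.congr_fun h (x - y)
    simp at this
    exact hxy (by rwa [sub_eq_zero] at this)
  have hgint : IsIntegral E g := IsIntegral.of_finite E g
  have hdvd : minpoly E g ∣ A.charpoly := minpoly.dvd E g hgcharpoly
  have hsplitsA : (A.charpoly).Splits := by
    rw [hA, Matrix.charpoly_map]
    exact hsplit
  have hsplitsg : (minpoly E g).Splits :=
    hsplitsA.of_dvd (A.charpoly_monic.ne_zero) hdvd
  have hdegg : (minpoly E g).degree ≠ 0 :=
    ne_of_gt (Polynomial.natDegree_pos_iff_degree_pos.mp (minpoly.natDegree_pos hgint))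
  obtain ⟨lam, hlam⟩ := hsplitsg.exists_eval_eq_zero hdegg
  have hlamroot : (minpoly E g).IsRoot lam := hlam
  have heig := Module.End.hasEigenvalue_of_isRoot (f := g) hlamroot
  obtain ⟨v', hv'⟩ := heig.exists_hasEigenvector
  have hgv : g v' = lam • v' := Module.End.mem_eigenspace_iff.mp hv'.1
  have hva : (v' : Fin p → E) ᵥ* A = lam • (v' : Fin p → E) := by
    have h6 := congrArg (Subtype.val) hgv
    rw [hg, LinearMap.restrict_apply] at h6
    rw [← hf_apply]
    exact h6
  refine ⟨lam, ?_, (v' : Fin p → E), ?_, ?_, ?_⟩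
  · have h2 : (A.charpoly).eval lam = 0 := by
      obtain ⟨c, hc⟩ := hdvd
      rw [hc, Polynomial.eval_mul, hlamroot, zero_mul]
    rw [Polynomial.aeval_def, ← Polynomial.eval_map, ← Matrix.charpoly_map H (algebraMap F E)]
    exact h2
  · exact fun h => hv'.2 (Subtype.ext h)
  · rw [Matrix.vecMul_sub, hva, my_vecMul_smul, Matrix.vecMul_one, sub_self]
  · have h7 := (hmemW (v' : Fin p → E)).1 v'.2 0
    rwa [pow_zero, Matrix.one_mul] at h7
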